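/- f(a; t) is a quasi-polynomial of period m = lcm(a_1, ..., a_n): there exist polynomials f_0, ..., f_{m-1} with rational coefficients such that f(a; t) = f_i(t) whenever t ≡ i (mod m). Moreover, each constituent polynomial f_i has degree n-1 with leading coefficient 1/((n-1)! · a_1 · ... · a_n). -/

import Mathlib

open Polynomial Finset

lemma starsBars (N k : ℕ) :
    Nat.card {q : Fin N → ℕ // ∑ j, q j = k} = (N + k - 1).choose k := by
  rw [Nat.card_congr (Sym.equivNatSumOfFintype (Fin N) k).symm,
    Nat.card_eq_fintype_card, Sym.card_sym_eq_choose, Fintype.card_fin]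

lemma ascFactorial_cast (k s : ℕ) :
    (((k+1).ascFactorial s : ℕ) : ℚ) = ∏ r ∈ Finset.range s, ((k : ℚ) + 1 + r) := by
  induction s with
  | zero => simp
  | succ s ih => rw [Nat.ascFactorial_succ, Finset.prod_range_succ, ← ih]; push_cast; ring

lemma starsBarsQ (N k : ℕ) (hN : 1 ≤ N) :
    (Nat.card {q : Fin N → ℕ // ∑ j, q j = k} : ℚ)
      = (((N-1).factorial : ℚ))⁻¹ * ∏ r ∈ Finset.range (N-1), ((k : ℚ) + 1 + r) := by
  rw [starsBars, ← ascFactorial_cast, Nat.ascFactorial_eq_factorial_mul_choose]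
  have h2 : (N + k - 1).choose k = (k + (N - 1)).choose (N - 1) := by
    have h3 := Nat.choose_symm (Nat.le_add_right k (N-1))
    rw [Nat.add_sub_cancel_left] at h3
    rw [h3]; congr 1; omega
  rw [h2]
  push_cast
  field_simp

lemma finset_bezout {ι : Type*} [DecidableEq ι] (a : ι → ℕ) (s : Finset ι) :
    ∃ c : ι → ℤ, ∑ j ∈ s, c j * a j = s.gcd a := by
  induction s using Finset.induction_on with
  | empty => exact ⟨0, by simp⟩
  | insert j s hj ih =>
    obtain ⟨c, hc⟩ := ih
    refine ⟨fun k => if k = j then Nat.gcdA (a j) (s.gcd a) else Nat.gcdB (a j) (s.gcd a) * c k, ?_⟩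
    rw [Finset.sum_insert hj, Finset.gcd_insert]
    simp only [if_pos rfl]
    have : ∑ k ∈ s, (if k = j then Nat.gcdA (a j) (s.gcd a) else Nat.gcdB (a j) (s.gcd a) * c k) * a k
        = Nat.gcdB (a j) (s.gcd a) * ∑ k ∈ s, c k * a k := by
      rw [Finset.mul_sum]
      refine Finset.sum_congr rfl fun k hk => ?_
      rw [if_neg (by rintro rfl; exact hj hk)]; ring
    rw [this, hc]
    have hg : (gcd (a j) (s.gcd a) : ℕ) = Nat.gcd (a j) (s.gcd a) := rfl
    rw [hg]
    push_cast [Nat.gcd_eq_gcd_ab (a j) (s.gcd a)]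
    ring

lemma nat_card_sigma {ι : Type*} [Fintype ι] (F : ι → Type*) [∀ i, Finite (F i)] :
    Nat.card (Σ i, F i) = ∑ i, Nat.card (F i) := by
  haveI : ∀ i, Fintype (F i) := fun i => Fintype.ofFinite _
  simp [Nat.card_eq_fintype_card, Fintype.card_sigma]

/-- Number of representations of `t` as a nonnegative integer combination of `a`. -/
noncomputable def numRep {ι : Type} [Fintype ι] (a : ι → ℕ) (t : ℕ) : ℕ :=
  Nat.card {x : ι → ℕ // ∑ i, a i * x i = t}

theorem stmt9 (n : ℕ) (hn : 1 ≤ n) (a : Fin n → ℕ) (hpos : ∀ i, 0 < a i)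
    (hgcd : Finset.univ.gcd a = 1)
    (m : ℕ) (hm : m = Finset.univ.lcm a) :
    ∃ P : ℕ → Polynomial ℚ,
      (∀ t : ℕ, (numRep a t : ℚ) = (P (t % m)).eval (t : ℚ)) ∧
      ∀ i < m, (P i).degree = (n - 1 : ℕ) ∧
        (P i).leadingCoeff = 1 / ((n - 1).factorial * ∏ j, (a j : ℚ)) := by
  classical
  -- basic positivity facts
  have hdvd : ∀ j, a j ∣ m := fun j => hm ▸ Finset.dvd_lcm (Finset.mem_univ j)
  have hm0 : 0 < m := by
    rcases Nat.eq_zero_or_pos m with h | h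
    · exfalso
      have h0 : Finset.univ.lcm a = 0 := by rw [← hm, h]
      rw [Finset.lcm_eq_zero_iff] at h0
      obtain ⟨j, -, hj⟩ := h0
      exact (hpos j).ne' hj
    · exact h
  haveI : NeZero m := ⟨hm0.ne'⟩
  haveI hNZ : ∀ j, NeZero (m / a j) := fun j =>
    ⟨(Nat.div_pos (Nat.le_of_dvd hm0 (hdvd j)) (hpos j)).ne'⟩
  have hmQ : (m : ℚ) ≠ 0 := Nat.cast_ne_zero.mpr hm0.ne'
  have hfQ : (((n-1).factorial : ℕ) : ℚ) ≠ 0 := Nat.cast_ne_zero.mpr (Nat.factorial_ne_zero _)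
  -- the arithmetic "mod/div" identity
  have harith : ∀ (j : Fin n) (v : ℕ),
      a j * (v % (m / a j)) + m * (v / (m / a j)) = a j * v := by
    intro j v
    have hd : a j * (m / a j) = m := Nat.mul_div_cancel' (hdvd j)
    calc a j * (v % (m / a j)) + m * (v / (m / a j))
        = a j * (v % (m / a j)) + a j * (m / a j) * (v / (m / a j)) := by rw [hd]
      _ = a j * (v % (m / a j) + (m / a j) * (v / (m / a j))) := by ring
      _ = a j * v := by rw [Nat.mod_add_div]
  -- `S r` is the weighted sum of a tuple of residues
  set S : (∀ j, ZMod (m / a j)) → ℕ := fun r => ∑ j, a j * (r j).val with hSdef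
  set c : ℕ → ℕ := fun e => (univ.filter (fun r => S r = e)).card with hcdef
  have hSlt : ∀ r, S r < n * m := by
    intro r
    have h1 : ∀ j : Fin n, a j * (r j).val ≤ m - 1 := by
      intro j
      have hv : (r j).val + 1 ≤ m / a j := ZMod.val_lt (r j)
      have h2 : a j * ((r j).val + 1) ≤ a j * (m / a j) := Nat.mul_le_mul_left _ hv
      rw [Nat.mul_div_cancel' (hdvd j)] at h2
      have h3 := hpos j
      rw [Nat.mul_add, Nat.mul_one] at h2
      omega
    calc S r ≤ ∑ _j : Fin n, (m - 1) := Finset.sum_le_sum (fun j _ => h1 j)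
      _ = n * (m - 1) := by rw [Finset.sum_const, Finset.card_univ, Fintype.card_fin, smul_eq_mul]
      _ < n * m := mul_lt_mul_of_pos_left (by omega) (by omega)
  -- key cast identity in `ZMod m`
  have hkey : ∀ (j : Fin n) (v : ℕ),
      ((a j * (v % (m / a j)) : ℕ) : ZMod m) = ((a j * v : ℕ) : ZMod m) := by
    intro j v
    calc ((a j * (v % (m / a j)) : ℕ) : ZMod m)
        = ((a j * (v % (m / a j)) + m * (v / (m / a j)) : ℕ) : ZMod m) := by
          push_cast; simp
      _ = _ := by rw [harith]
  set φ : (∀ j, ZMod (m / a j)) → ZMod m := fun r => ((S r : ℕ) : ZMod m) with hφdef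
  have hφadd : ∀ x y, φ (x + y) = φ x + φ y := by
    intro x y
    have e1 : φ (x + y) = ∑ j, ((a j * ((x j).val + (y j).val) : ℕ) : ZMod m) := by
      show ((∑ j, a j * ((x + y) j).val : ℕ) : ZMod m) = _
      rw [Nat.cast_sum]
      refine Finset.sum_congr rfl fun j _ => ?_
      rw [show ((x + y) j).val = ((x j).val + (y j).val) % (m / a j) from ZMod.val_add _ _, hkey]
    rw [e1]
    show _ = ((∑ j, a j * (x j).val : ℕ) : ZMod m) + ((∑ j, a j * (y j).val : ℕ) : ZMod m)
    push_cast
    rw [← Finset.sum_add_distrib]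
    exact Finset.sum_congr rfl fun j _ => by ring
  -- a preimage of 1
  obtain ⟨co, hco⟩ := finset_bezout a Finset.univ
  rw [hgcd] at hco
  set r1 : ∀ j, ZMod (m / a j) := fun j => ((co j : ℤ) : ZMod (m / a j)) with hr1def
  have hφ1 : φ r1 = 1 := by
    have hval : ∀ j, ((a j * (r1 j).val : ℕ) : ZMod m) = ((a j * co j : ℤ) : ZMod m) := by
      intro j
      have hd : a j * (m / a j) = m := Nat.mul_div_cancel' (hdvd j)
      have h1 : ((((r1 j).val : ℤ) - co j : ℤ) : ZMod (m / a j)) = 0 := by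
        push_cast
        rw [ZMod.natCast_val, ZMod.cast_id]
        exact sub_eq_zero_of_eq rfl
      rw [ZMod.intCast_zmod_eq_zero_iff_dvd] at h1
      obtain ⟨km, hkm⟩ := h1
      have hdZ : ((a j : ℕ) : ℤ) * ((m / a j : ℕ) : ℤ) = (m : ℤ) := by exact_mod_cast hd
      have h3 : ((a j * (r1 j).val : ℕ) : ℤ) = (a j : ℤ) * co j + m * km := by
        have h4 : ((r1 j).val : ℤ) = co j + (m / a j : ℕ) * km := by linarith [hkm]
        push_cast
        rw [h4]
        linear_combination (km : ℤ) * hdZ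
      calc ((a j * (r1 j).val : ℕ) : ZMod m)
          = (((a j * (r1 j).val : ℕ) : ℤ) : ZMod m) := by push_cast; ring
        _ = (((a j : ℤ) * co j + m * km : ℤ) : ZMod m) := by rw [h3]
        _ = ((a j * co j : ℤ) : ZMod m) := by push_cast; simp
    show ((∑ j, a j * (r1 j).val : ℕ) : ZMod m) = 1
    rw [Nat.cast_sum]
    calc ∑ j, ((a j * (r1 j).val : ℕ) : ZMod m)
        = ∑ j, ((a j * co j : ℤ) : ZMod m) := Finset.sum_congr rfl fun j _ => hval j
      _ = ((∑ j, a j * co j : ℤ) : ZMod m) := by rw [Int.cast_sum]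
      _ = ((∑ j, co j * a j : ℤ) : ZMod m) := by congr 1; exact Finset.sum_congr rfl fun j _ => by ring
      _ = 1 := by rw [hco]; norm_num
  have hsurj : ∀ y : ZMod m, ∃ r, φ r = y := by
    have hsmul : ∀ (k : ℕ), φ (k • r1) = k • (1 : ZMod m) := by
      intro k
      induction k with
      | zero =>
        simp only [zero_smul, zero_nsmul]
        show ((∑ j, a j * ((0 : ∀ j, ZMod (m / a j)) j).val : ℕ) : ZMod m) = 0
        simp [ZMod.val_zero]
      | succ k ih => rw [succ_nsmul, hφadd, ih, hφ1, succ_nsmul]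
    intro y
    refine ⟨y.val • r1, ?_⟩
    rw [hsmul, nsmul_eq_mul, mul_one, ZMod.natCast_rightInverse y]
  -- all fibers of φ have equal cardinality
  have hfiber : ∀ y₁ y₂ : ZMod m,
      (univ.filter (fun r => φ r = y₁)).card = (univ.filter (fun r => φ r = y₂)).card := by
    intro y₁ y₂
    obtain ⟨r₀, hr₀⟩ := hsurj (y₂ - y₁)
    have hsub : ∀ r, φ (r - r₀) = φ r - (y₂ - y₁) := by
      intro r
      rw [eq_sub_iff_add_eq, ← hr₀, ← hφadd, sub_add_cancel]
    refine Finset.card_bij' (fun r _ => r + r₀) (fun r _ => r - r₀) ?_ ?_ ?_ ?_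
    · intro r hr
      simp only [Finset.mem_filter, Finset.mem_univ, true_and] at hr ⊢
      rw [hφadd, hr, hr₀]; abel
    · intro r hr
      simp only [Finset.mem_filter, Finset.mem_univ, true_and] at hr ⊢
      rw [hsub, hr]; abel
    · intro r _; simp only [add_sub_cancel_right]
    · intro r _; simp only [sub_add_cancel]
  have hcardZ : (univ : Finset (∀ j, ZMod (m / a j))).card = ∏ j, (m / a j) := by
    rw [Finset.card_univ, Fintype.card_pi]
    exact Finset.prod_congr rfl fun j _ => ZMod.card _
  have hFi : ∀ y : ZMod m, (univ.filter (fun r => φ r = y)).card * m = ∏ j, (m / a j) := by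
    intro y
    have h1 : (univ : Finset (∀ j, ZMod (m / a j))).card
        = ∑ z : ZMod m, (univ.filter (fun r => φ r = z)).card :=
      Finset.card_eq_sum_card_fiberwise (fun r _ => Finset.mem_univ (φ r))
    have h2 : ∑ z : ZMod m, (univ.filter (fun r => φ r = z)).card
        = ∑ _z : ZMod m, (univ.filter (fun r => φ r = y)).card :=
      Finset.sum_congr rfl (fun z _ => hfiber z y)
    have h3 : ∑ _z : ZMod m, (univ.filter (fun r => φ r = y)).card
        = m * (univ.filter (fun r => φ r = y)).card := by
      rw [Finset.sum_const, Finset.card_univ, ZMod.card, smul_eq_mul]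
    rw [← hcardZ, h1, h2, h3, mul_comm]
  -- identify nat-filters with ZMod filters
  have hcast_iff : ∀ (i : ℕ), i < m → ∀ (u : ℕ), ((u : ZMod m) = (i : ZMod m)) ↔ u % m = i := by
    intro i hi u
    constructor
    · intro h
      have := congrArg ZMod.val h
      rwa [ZMod.val_natCast, ZMod.val_natCast, Nat.mod_eq_of_lt hi] at this
    · intro h
      conv_lhs => rw [← Nat.mod_add_div u m]
      push_cast
      simp [h]
  have hfilter_eq : ∀ i : ℕ, i < m →
      univ.filter (fun r => S r % m = i) = univ.filter (fun r => φ r = (i : ZMod m)) := by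
    intro i hi
    ext r
    simp only [Finset.mem_filter, Finset.mem_univ, true_and]
    rw [hφdef]
    exact (hcast_iff i hi (S r)).symm
  -- the fiberwise summation lemma
  have hsum : ∀ i : ℕ, i < m → ∀ v : ℕ → ℚ,
      ∑ r ∈ univ.filter (fun r => S r % m = i), v (S r / m)
        = ∑ l ∈ range n, (c (i + l * m) : ℚ) * v l := by
    intro i hi v
    rw [← Finset.sum_fiberwise_of_maps_to (g := fun r => S r / m) (t := range n)
      (fun r hr => Finset.mem_range.mpr ((Nat.div_lt_iff_lt_mul hm0).mpr (hSlt r)))]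
    refine Finset.sum_congr rfl fun l hl => ?_
    have hff : (univ.filter (fun r => S r % m = i)).filter (fun r => S r / m = l)
        = univ.filter (fun r => S r = i + l * m) := by
      rw [Finset.filter_filter]
      ext r
      simp only [Finset.mem_filter, Finset.mem_univ, true_and]
      constructor
      · rintro ⟨h1, h2⟩
        calc S r = S r % m + m * (S r / m) := (Nat.mod_add_div _ _).symm
          _ = i + l * m := by rw [h1, h2, mul_comm]
      · intro h
        constructor
        · rw [h, Nat.add_mul_mod_self_right, Nat.mod_eq_of_lt hi]
        · rw [h, Nat.add_mul_div_right _ _ hm0, Nat.div_eq_of_lt hi, zero_add]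
    calc ∑ r ∈ (univ.filter (fun r => S r % m = i)).filter (fun r => S r / m = l), v (S r / m)
        = ∑ r ∈ (univ.filter (fun r => S r % m = i)).filter (fun r => S r / m = l), v l := by
          refine Finset.sum_congr rfl fun r hr => ?_
          rw [(Finset.mem_filter.mp hr).2]
      _ = (c (i + l * m) : ℚ) * v l := by
          rw [Finset.sum_const, hff, nsmul_eq_mul]
  -- finiteness of the fibers
  have hfinGen : ∀ (e t : ℕ), Finite {q : Fin n → ℕ // e + m * ∑ j, q j = t} := by
    intro e t
    have hb : ∀ (q : {q : Fin n → ℕ // e + m * ∑ j, q j = t}) (j : Fin n), q.1 j ≤ t := by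
      intro q j
      calc q.1 j ≤ ∑ j', q.1 j' :=
            Finset.single_le_sum (fun _ _ => Nat.zero_le _) (Finset.mem_univ j)
        _ ≤ m * ∑ j', q.1 j' := Nat.le_mul_of_pos_left _ hm0
        _ ≤ e + m * ∑ j', q.1 j' := Nat.le_add_left _ _
        _ = t := q.2
    exact Finite.of_injective
      (fun q => (fun j => (⟨q.1 j, Nat.lt_succ_of_le (hb q j)⟩ : Fin (t+1)) : Fin n → Fin (t+1)))
      (fun q q' h => Subtype.ext (funext fun j => congrArg Fin.val (congrFun h j)))
  -- main decomposition of the representation count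
  have hmain : ∀ t : ℕ, (numRep a t : ℚ)
      = ∑ r : (∀ j, ZMod (m / a j)),
          (Nat.card {q : Fin n → ℕ // S r + m * ∑ j, q j = t} : ℚ) := by
    intro t
    haveI : ∀ r : (∀ j, ZMod (m / a j)), Finite {q : Fin n → ℕ // S r + m * ∑ j, q j = t} :=
      fun r => hfinGen (S r) t
    have E : {x : Fin n → ℕ // ∑ j, a j * x j = t}
        ≃ (Σ r : ∀ j, ZMod (m / a j), {q : Fin n → ℕ // S r + m * ∑ j, q j = t}) :=
      { toFun := fun x => ⟨fun j => ((x.1 j : ℕ) : ZMod (m / a j)),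
          ⟨fun j => x.1 j / (m / a j), by
            have h1 : S (fun j => ((x.1 j : ℕ) : ZMod (m / a j)))
                = ∑ j, a j * (x.1 j % (m / a j)) := by
              rw [hSdef]
              exact Finset.sum_congr rfl fun j _ => by rw [ZMod.val_natCast]
            rw [h1, Finset.mul_sum, ← Finset.sum_add_distrib,
              Finset.sum_congr rfl fun j _ => harith j (x.1 j)]
            exact x.2⟩⟩,
        invFun := fun p => ⟨fun j => (p.1 j).val + (m / a j) * p.2.1 j, by
          have h1 : ∀ j, a j * ((p.1 j).val + (m / a j) * p.2.1 j)
              = a j * (p.1 j).val + m * p.2.1 j := by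
            intro j
            rw [Nat.mul_add, ← mul_assoc, Nat.mul_div_cancel' (hdvd j)]
          rw [Finset.sum_congr rfl fun j _ => h1 j, Finset.sum_add_distrib, ← Finset.mul_sum]
          exact p.2.2⟩,
        left_inv := fun x => Subtype.ext (funext fun j => by
          simp only [ZMod.val_natCast]
          exact Nat.mod_add_div _ _),
        right_inv := fun p => by
          refine Sigma.subtype_ext (funext fun j => ?_) (funext fun j => ?_)
          · push_cast
            simp [ZMod.natCast_val, ZMod.cast_id]
          · show ((p.1 j).val + (m / a j) * p.2.1 j) / (m / a j) = p.2.1 j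
            rw [Nat.add_mul_div_left _ _ (Nat.pos_of_ne_zero (hNZ j).out),
              Nat.div_eq_of_lt (ZMod.val_lt _), zero_add] }
    rw [numRep, Nat.card_congr E, nat_card_sigma, Nat.cast_sum]
  -- the polynomials
  set B : ℕ → ℕ → Polynomial ℚ := fun i l =>
    Polynomial.C ((((n-1).factorial : ℚ) * (m:ℚ)^(n-1))⁻¹)
      * ∏ r' ∈ range (n-1),
          (Polynomial.X + Polynomial.C ((m:ℚ)*(1+(r':ℚ)-(l:ℚ)) - (i:ℚ))) with hBdef
  have hBeval : ∀ (i l : ℕ) (x : ℚ), (B i l).eval x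
      = (((n-1).factorial : ℚ) * (m:ℚ)^(n-1))⁻¹
        * ∏ r' ∈ range (n-1), (x + ((m:ℚ)*(1+(r':ℚ)-(l:ℚ)) - (i:ℚ))) := by
    intro i l x
    rw [hBdef]
    simp only [eval_mul, eval_C, eval_prod, eval_add, eval_X]
  -- evaluation of each fiber count
  have hstep2 : ∀ (t : ℕ) (r : ∀ j, ZMod (m / a j)),
      (Nat.card {q : Fin n → ℕ // S r + m * ∑ j, q j = t} : ℚ)
        = if S r % m = t % m then (B (t % m) (S r / m)).eval (t : ℚ) else 0 := by
    intro t r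
    by_cases h : S r % m = t % m
    · rw [if_pos h]
      have hSr : S r = t % m + (S r / m) * m := by
        calc S r = S r % m + m * (S r / m) := (Nat.mod_add_div _ _).symm
          _ = t % m + (S r / m) * m := by rw [h, mul_comm]
      have hln : S r / m < n := (Nat.div_lt_iff_lt_mul hm0).mpr (hSlt r)
      by_cases hle : S r ≤ t
      · have hlm : S r / m ≤ t / m := Nat.div_le_div_right hle
        have haux : ∀ x y : ℕ, x ≤ y → y = x + (y - x) := fun x y hxy => by omega
        have hK2 : t / m = S r / m + (t / m - S r / m) := haux _ _ hlm
        have ht : t = t % m + (S r / m) * m + (t / m - S r / m) * m := by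
          calc t = t % m + m * (t / m) := (Nat.mod_add_div _ _).symm
            _ = t % m + m * (S r / m + (t / m - S r / m)) := by rw [← hK2]
            _ = t % m + (S r / m) * m + (t / m - S r / m) * m := by ring
        have hcardeq : Nat.card {q : Fin n → ℕ // S r + m * ∑ j, q j = t}
            = Nat.card {q : Fin n → ℕ // ∑ j, q j = t / m - S r / m} := by
          refine Nat.card_congr (Equiv.subtypeEquivRight ?_)
          intro q
          constructor
          · intro hq
            have hA : m * ∑ j, q j = m * (t / m - S r / m) := by linarith [hq, hSr, ht]
            exact Nat.eq_of_mul_eq_mul_left hm0 hA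
          · intro hq
            rw [hq]
            linarith [hSr, ht]
        rw [hcardeq, starsBarsQ n _ hn, hBeval]
        have hprod : ∏ r' ∈ range (n-1),
              ((t:ℚ) + ((m:ℚ)*(1+(r':ℚ)-((S r / m : ℕ):ℚ)) - ((t % m : ℕ):ℚ)))
            = ∏ r' ∈ range (n-1), ((m:ℚ) * (((t / m - S r / m : ℕ):ℚ) + 1 + (r':ℚ))) := by
          refine Finset.prod_congr rfl fun r' _ => ?_
          have htq : (t:ℚ) = ((t % m : ℕ):ℚ) + ((S r / m : ℕ):ℚ) * m
              + ((t / m - S r / m : ℕ):ℚ) * m := by exact_mod_cast ht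
          rw [htq]; ring
        rw [hprod, Finset.prod_mul_distrib, Finset.prod_const, Finset.card_range]
        field_simp
      · have hempty : IsEmpty {q : Fin n → ℕ // S r + m * ∑ j, q j = t} := by
          refine ⟨fun q => hle ?_⟩
          rw [← q.2]; exact Nat.le_add_right _ _
        rw [Nat.card_of_isEmpty, Nat.cast_zero, hBeval]
        symm
        apply mul_eq_zero_of_right
        have hk'l : t / m < S r / m := by
          by_contra hcon
          push_neg at hcon
          apply hle
          calc S r = t % m + (S r / m) * m := hSr
            _ ≤ t % m + (t / m) * m := Nat.add_le_add_left (Nat.mul_le_mul_right m hcon) _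
            _ = t := by rw [mul_comm (t / m) m, Nat.mod_add_div]
        have harr : ∀ lv kv N : ℕ, lv < N → kv < lv → lv - 1 - kv < N - 1 :=
          fun lv kv N h1 h2 => by omega
        apply Finset.prod_eq_zero
          (Finset.mem_range.mpr (harr _ _ _ hln hk'l))
        have h10 : 1 + t / m ≤ S r / m := by rw [Nat.add_comm]; exact hk'l
        have hcast : ((S r / m - 1 - t / m : ℕ) : ℚ)
            = ((S r / m : ℕ):ℚ) - 1 - ((t / m : ℕ):ℚ) := by
          rw [Nat.sub_sub, Nat.cast_sub h10]
          push_cast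
          ring
        have htq : (t:ℚ) = ((t % m : ℕ):ℚ) + ((t / m : ℕ):ℚ) * m := by
          have h9 : t = t % m + (t / m) * m := by rw [mul_comm, Nat.mod_add_div]
          exact_mod_cast h9
        rw [hcast, htq]; ring
    · rw [if_neg h]
      have hempty : IsEmpty {q : Fin n → ℕ // S r + m * ∑ j, q j = t} := by
        refine ⟨fun q => h ?_⟩
        have h2 : S r + m * ∑ j, q.1 j = t := q.2
        have h3 : (S r + m * ∑ j, q.1 j) % m = S r % m := Nat.add_mul_mod_self_left _ _ _
        rw [h2] at h3
        exact h3.symm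
      rw [Nat.card_of_isEmpty, Nat.cast_zero]
  refine ⟨fun i => ∑ l ∈ range n, Polynomial.C ((c (i + l * m) : ℕ) : ℚ) * B i l, ?_, ?_⟩
  · -- evaluation identity
    intro t
    rw [hmain t, Finset.sum_congr rfl (fun r _ => hstep2 t r), ← Finset.sum_filter,
      hsum (t % m) (Nat.mod_lt t hm0) (fun l => (B (t % m) l).eval (t:ℚ)),
      Polynomial.eval_finset_sum]
    exact Finset.sum_congr rfl fun l _ => by simp only [eval_mul, eval_C]
  · -- degree and leading coefficient
    intro i hi
    have hmonic : ∀ l : ℕ, (∏ r' ∈ range (n-1),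
        (Polynomial.X + Polynomial.C ((m:ℚ)*(1+(r':ℚ)-(l:ℚ)) - (i:ℚ)))).Monic :=
      fun l => monic_prod_of_monic _ _ fun r' _ => monic_X_add_C _
    have hdegQ : ∀ l : ℕ, (∏ r' ∈ range (n-1),
        (Polynomial.X + Polynomial.C ((m:ℚ)*(1+(r':ℚ)-(l:ℚ)) - (i:ℚ)))).natDegree = n - 1 := by
      intro l
      rw [natDegree_prod _ _ fun r' _ => (monic_X_add_C _).ne_zero,
        Finset.sum_congr rfl (fun r' _ => natDegree_X_add_C _),
        Finset.sum_const, Finset.card_range, smul_eq_mul, mul_one]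
    have hcoeff : (∑ l ∈ range n, Polynomial.C ((c (i + l * m) : ℕ) : ℚ) * B i l).coeff (n-1)
        = (∑ l ∈ range n, ((c (i + l * m) : ℕ) : ℚ))
            * (((n-1).factorial : ℚ) * (m:ℚ)^(n-1))⁻¹ := by
      rw [finset_sum_coeff, Finset.sum_mul]
      refine Finset.sum_congr rfl fun l _ => ?_
      have h5 := (hmonic l).coeff_natDegree
      rw [hdegQ l] at h5
      rw [hBdef, coeff_C_mul, coeff_C_mul, h5]
      ring
    have hcsum : (∑ l ∈ range n, ((c (i + l * m) : ℕ) : ℚ))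
        = ((univ.filter (fun r => S r % m = i)).card : ℚ) := by
      have h6 := hsum i hi (fun _ => 1)
      simp only [Finset.sum_const, nsmul_eq_mul, mul_one] at h6
      exact h6.symm
    have hFn : ((univ.filter (fun r => S r % m = i)).card) * m * (∏ j, a j) = m ^ n := by
      rw [hfilter_eq i hi, hFi ((i : ℕ) : ZMod m), ← Finset.prod_mul_distrib]
      calc ∏ j, (m / a j * a j) = ∏ _j : Fin n, m :=
          Finset.prod_congr rfl fun j _ => Nat.div_mul_cancel (hdvd j)
        _ = m ^ n := by rw [Finset.prod_const, Finset.card_univ, Fintype.card_fin]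
    have hprodQ : (∏ j, (a j : ℚ)) ≠ 0 :=
      Finset.prod_ne_zero_iff.mpr fun j _ => Nat.cast_ne_zero.mpr (hpos j).ne'
    have hFQ : ((univ.filter (fun r => S r % m = i)).card : ℚ) * (∏ j, (a j : ℚ))
        = (m:ℚ)^(n-1) := by
      have h7 : ((univ.filter (fun r => S r % m = i)).card : ℚ) * m * (∏ j, (a j : ℚ))
          = (m:ℚ)^n := by exact_mod_cast hFn
      have h8 : (m:ℚ)^n = (m:ℚ)^(n-1) * m := by rw [← pow_succ, Nat.sub_add_cancel hn]
      apply mul_right_cancel₀ hmQ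
      rw [← h8]
      linarith [h7]
    have hcval : (∑ l ∈ range n, Polynomial.C ((c (i + l * m) : ℕ) : ℚ) * B i l).coeff (n-1)
        = 1 / ((n-1).factorial * ∏ j, (a j : ℚ)) := by
      rw [hcoeff, hcsum, eq_div_iff (mul_ne_zero hfQ hprodQ)]
      have e1 : ∀ Fq pa fq mq : ℚ, fq * mq ≠ 0 → Fq * pa = mq →
          Fq * (fq * mq)⁻¹ * (fq * pa) = 1 := by
        intro Fq pa fq mq hne hFp
        rw [show Fq * (fq * mq)⁻¹ * (fq * pa) = (fq * (Fq * pa)) * (fq * mq)⁻¹ from by ring,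
          hFp, mul_inv_cancel₀ hne]
      exact e1 _ _ _ _ (mul_ne_zero hfQ (pow_ne_zero _ hmQ)) hFQ
    have hdegle : (∑ l ∈ range n, Polynomial.C ((c (i + l * m) : ℕ) : ℚ) * B i l).degree
        ≤ ((n-1 : ℕ) : WithBot ℕ) := by
      refine (Polynomial.degree_sum_le _ _).trans (Finset.sup_le fun l _ => ?_)
      have hQdeg : (∏ r' ∈ range (n-1),
          (Polynomial.X + Polynomial.C ((m:ℚ)*(1+(r':ℚ)-(l:ℚ)) - (i:ℚ)))).degree
          = ((n-1 : ℕ) : WithBot ℕ) := by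
        rw [Polynomial.degree_eq_natDegree (hmonic l).ne_zero, hdegQ l]
      rw [hBdef, ← mul_assoc, ← Polynomial.C_mul, ← Polynomial.smul_eq_C_mul]
      exact (Polynomial.degree_smul_le _ _).trans (le_of_eq hQdeg)
    have hcne : (∑ l ∈ range n, Polynomial.C ((c (i + l * m) : ℕ) : ℚ) * B i l).coeff (n-1) ≠ 0 := by
      rw [hcval]
      exact one_div_ne_zero (mul_ne_zero hfQ hprodQ)
    have hdegeq := Polynomial.degree_eq_of_le_of_coeff_ne_zero hdegle hcne
    refine ⟨hdegeq, ?_⟩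
    rw [Polynomial.leadingCoeff, Polynomial.natDegree_eq_of_degree_eq_some hdegeq, hcval]
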